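/- Let X be a normal Tychonoff space, P realcompactness, and λ_P X = ⋃ { int_{βX} cl_{βX} C : C cozero in X with cl_X C realcompact }. Then λ_P X = βX \ cl_{βX}(υX \ X). -/

import Mathlib

open Topology Filter Set

noncomputable section

def IsRealcompactSpace (Y : Type) [TopologicalSpace Y] : Prop :=
  ∃ (ι : Type) (f : Y → ι → ℝ), Topology.IsClosedEmbedding f

def hewitt (X : Type) [TopologicalSpace X] : Set (StoneCech X) :=
  ⋂₀ {C : Set (StoneCech X) |
      (∃ f : StoneCech X → ℝ, Continuous f ∧ C = {x | f x ≠ 0}) ∧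
        Set.range (stoneCechUnit : X → StoneCech X) ⊆ C}

lemma mem_hewitt_iff {X : Type} [TopologicalSpace X] {q : StoneCech X} :
    q ∈ hewitt X ↔ ∀ f : StoneCech X → ℝ, Continuous f →
      Set.range (stoneCechUnit : X → StoneCech X) ⊆ {x | f x ≠ 0} → f q ≠ 0 := by
  constructor
  · intro hq f hf hr
    exact hq _ ⟨⟨f, hf, rfl⟩, hr⟩
  · rintro h C ⟨⟨f, hf, rfl⟩, hr⟩
    exact h f hf hr

lemma range_subset_hewitt {X : Type} [TopologicalSpace X] :
    Set.range (stoneCechUnit : X → StoneCech X) ⊆ hewitt X := by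
  rintro q hq C ⟨-, hr⟩
  exact hr hq


/-- stoneCechUnit is inducing for T3.5 spaces. -/
lemma isInducing_stoneCechUnit' {X : Type} [TopologicalSpace X] [T35Space X] :
    IsInducing (stoneCechUnit : X → StoneCech X) := by
  rw [isInducing_iff_nhds]
  intro x
  refine le_antisymm (tendsto_iff_comap.mp (continuous_stoneCechUnit.tendsto x)) ?_
  intro U hU
  rcases mem_nhds_iff.mp hU with ⟨U', hU'U, hU'open, hxU'⟩
  obtain ⟨f, hf, hfx, hfK⟩ := CompletelyRegularSpace.completely_regular x U'ᶜ
    hU'open.isClosed_compl (by simpa using hxU')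
  set F := stoneCechExtend hf with hF
  have hFe : F ∘ stoneCechUnit = f := stoneCechExtend_extends hf
  refine mem_comap.mpr ⟨F ⁻¹' {y : unitInterval | (y : ℝ) < 1/2}, ?_, ?_⟩
  · apply (continuous_stoneCechExtend hf).continuousAt.preimage_mem_nhds
    rw [show stoneCechExtend hf (stoneCechUnit x) = f x from congrFun hFe x, hfx]
    exact (isOpen_lt (continuous_subtype_val) continuous_const).mem_nhds (by norm_num)
  · intro x' hx'
    simp only [mem_preimage, mem_setOf_eq] at hx'
    have : F (stoneCechUnit x') = f x' := congrFun hFe x'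
    rw [this] at hx'
    by_contra hxU
    have hx'K : x' ∈ U'ᶜ := fun h => hxU (hU'U h)
    have := hfK hx'K
    rw [this] at hx'
    norm_num at hx'

lemma isEmbedding_stoneCechUnit' {X : Type} [TopologicalSpace X] [T35Space X] :
    IsEmbedding (stoneCechUnit : X → StoneCech X) :=
  ⟨isInducing_stoneCechUnit, injective_stoneCechUnit_of_t35Space⟩

namespace StmtAux

/-- the homeomorphism-like map `φ : ℝ → (-1,1)` -/
def phi (t : ℝ) : ℝ := t / (1 + |t|)

def psi (s : ℝ) : ℝ := s / (1 - |s|)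

lemma one_add_abs_pos (t : ℝ) : (0:ℝ) < 1 + |t| := by positivity

lemma abs_phi_lt (t : ℝ) : |phi t| < 1 := by
  rw [phi, abs_div, abs_of_pos (one_add_abs_pos t), div_lt_one (one_add_abs_pos t)]
  linarith

lemma abs_phi (t : ℝ) : |phi t| = |t| / (1 + |t|) := by
  rw [phi, abs_div, abs_of_pos (one_add_abs_pos t)]

lemma psi_phi (t : ℝ) : psi (phi t) = t := by
  have h := one_add_abs_pos t
  rw [psi, abs_phi, phi]
  have h1 : 1 - |t| / (1 + |t|) = 1 / (1 + |t|) := by field_simp; ring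
  rw [h1]
  field_simp

lemma continuous_phi : Continuous phi :=
  continuous_id.div (continuous_const.add continuous_abs)
    (fun t => ne_of_gt (one_add_abs_pos t))

lemma continuousAt_psi {s : ℝ} (hs : |s| < 1) : ContinuousAt psi s := by
  apply ContinuousAt.div continuousAt_id
    (continuousAt_const.sub continuous_abs.continuousAt)
  intro h
  change (1:ℝ) - |s| = 0 at h
  rw [sub_eq_zero] at h
  rw [← h] at hs
  exact lt_irrefl _ hs

end StmtAux

open StmtAux in
/-- Key lemma: if `closure C` is realcompact then
`closure (e '' C) ∩ hewitt X ⊆ range e`. -/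
lemma closure_inter_hewitt {X : Type} [TopologicalSpace X] [T35Space X] [NormalSpace X]
    {C : Set X} (hRC : IsRealcompactSpace ↥(closure C)) :
    closure (stoneCechUnit '' C) ∩ hewitt X ⊆
      Set.range (stoneCechUnit : X → StoneCech X) := by
  classical
  obtain ⟨ι, g, hg⟩ := hRC
  set e : X → StoneCech X := stoneCechUnit with he
  rintro q ⟨hqC, hqH⟩
  -- Tietze extensions of the coordinates of g
  have Hext : ∀ i : ι, ∃ h : C(X, ℝ), ∀ k : ↥(closure C), h ↑k = g k i := by
    intro i
    obtain ⟨h, hh⟩ := ContinuousMap.exists_restrict_eq (isClosed_closure (s := C))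
      (ContinuousMap.mk (fun k : ↥(closure C) => g k i) ((continuous_apply i).comp hg.continuous))
    exact ⟨h, fun k => by
      have := DFunLike.congr_fun hh k
      simpa using this⟩
  choose h hh using Hext
  -- extensions to the Stone-Cech compactification, valued in Icc (-1) 1
  have hmem : ∀ i x, phi (h i x) ∈ Set.Icc (-1:ℝ) 1 := by
    intro i x
    have := abs_phi_lt (h i x)
    rw [abs_lt] at this
    exact ⟨le_of_lt this.1, le_of_lt this.2⟩
  set f : ι → X → Set.Icc (-1:ℝ) 1 := fun i x => ⟨phi (h i x), hmem i x⟩ with hf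
  have contf : ∀ i, Continuous (f i) :=
    fun i => (continuous_phi.comp (h i).continuous).subtype_mk _
  set H : ι → StoneCech X → Set.Icc (-1:ℝ) 1 := fun i => stoneCechExtend (contf i) with hH
  have contH : ∀ i, Continuous (H i) := fun i => continuous_stoneCechExtend _
  have hHe : ∀ i x, H i (e x) = f i x := fun i x => congrFun (stoneCechExtend_extends (contf i)) x
  -- q is in the "finite part" of each extension
  have hlt : ∀ i, |(H i q : ℝ)| < 1 := by
    intro i
    have hne : (fun r => 1 - |(H i r : ℝ)|) q ≠ 0 := by
      apply mem_hewitt_iff.mp hqH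
      · exact continuous_const.sub (continuous_subtype_val.comp (contH i)).abs
      · rintro _ ⟨x, rfl⟩
        have : (H i (e x) : ℝ) = phi (h i x) := by rw [hHe]
        simp only [Set.mem_setOf_eq, this]
        have := abs_phi_lt (h i x)
        intro hc
        rw [sub_eq_zero] at hc
        have hx1 : (H i (stoneCechUnit x) : ℝ) = phi (h i x) := congrArg Subtype.val (hHe i x)
        rw [hx1] at hc
        rw [← hc] at this
        exact lt_irrefl _ this
    have hle : |(H i q : ℝ)| ≤ 1 := by
      have h2 := (H i q).2
      rw [Set.mem_Icc] at h2
      exact abs_le.mpr h2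
    rcases lt_or_eq_of_le hle with h' | h'
    · exact h'
    · exact absurd (show (fun r => 1 - |(H i r : ℝ)|) q = 0 by show 1 - |(H i q : ℝ)| = 0; rw [h']; ring) hne
  set y : ι → ℝ := fun i => psi ((H i q : ℝ)) with hy
  -- the filter argument
  have hqK : q ∈ closure (e '' closure C) :=
    closure_mono (Set.image_mono subset_closure) hqC
  haveI hne1 : (𝓝[e '' closure C] q).NeBot := mem_closure_iff_nhdsWithin_neBot.mp hqK
  set G : Filter X := comap e (𝓝[e '' closure C] q) with hG
  set G' : Filter ↥(closure C) := comap Subtype.val G with hG'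
  haveI hne2 : G'.NeBot := by
    apply comap_neBot
    intro t ht
    rcases mem_comap.mp ht with ⟨s, hs, hst⟩
    have hmem : s ∩ e '' closure C ∈ 𝓝[e '' closure C] q := inter_mem hs self_mem_nhdsWithin
    rcases Filter.nonempty_of_mem hmem with ⟨w, hws, x', hx'K, rfl⟩
    exact ⟨⟨x', hx'K⟩, hst hws⟩
  have hval : Tendsto (Subtype.val : ↥(closure C) → X) G' G := tendsto_comap
  have heG : Tendsto e G (𝓝[e '' closure C] q) := tendsto_comap
  have t0 : Tendsto (fun k : ↥(closure C) => e ↑k) G' (𝓝 q) :=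
    ((heG.comp hval).mono_right nhdsWithin_le_nhds)
  have ti : ∀ i, Tendsto (fun k : ↥(closure C) => g k i) G' (𝓝 (y i)) := by
    intro i
    have step1 : Tendsto (fun k : ↥(closure C) => ((H i (e ↑k) : ℝ))) G' (𝓝 ((H i q : ℝ))) :=
      (continuous_subtype_val.tendsto _).comp (((contH i).tendsto q).comp t0)
    have step3 : Tendsto (fun k : ↥(closure C) => psi ((H i (e ↑k) : ℝ))) G' (𝓝 (y i)) :=
      (continuousAt_psi (hlt i)).tendsto.comp step1
    apply step3.congr
    intro k
    have h1 : (H i (e ↑k) : ℝ) = phi (h i ↑k) := by rw [hHe]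
    rw [h1, psi_phi, hh]
  have tg : Tendsto g G' (𝓝 y) := tendsto_pi_nhds.mpr ti
  have hyr : y ∈ Set.range g := by
    have : y ∈ closure (Set.range g) :=
      mem_closure_of_tendsto tg (Eventually.of_forall fun k => ⟨k, rfl⟩)
    rwa [hg.isClosed_range.closure_eq] at this
  obtain ⟨k₀, hk₀⟩ := hyr
  have tk : Tendsto (fun k : ↥(closure C) => k) G' (𝓝 k₀) := by
    rw [hg.isEmbedding.tendsto_nhds_iff, hk₀]
    exact tg
  have tq : Tendsto (fun k : ↥(closure C) => e ↑k) G' (𝓝 (e ↑k₀)) :=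
    (continuous_stoneCechUnit.tendsto _).comp ((continuous_subtype_val.tendsto _).comp tk)
  exact ⟨↑k₀, (tendsto_nhds_unique t0 tq).symm⟩


/-- A compact set intersected with an intersection of cozero sets is realcompact. -/
lemma realcompact_aux {B : Type} [TopologicalSpace B] [CompactSpace B] [T2Space B]
    (D : Set B) (hD : IsClosed D) (S : Set (B → ℝ)) (hS : ∀ f ∈ S, Continuous f) :
    IsRealcompactSpace ↥(D ∩ {y | ∀ f ∈ S, f y ≠ 0}) := by
  classical
  set A : Set B := D ∩ {y | ∀ f ∈ S, f y ≠ 0} with hA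
  set ι : Type := {g : B → ℝ // Continuous g} ⊕ ↥S with hι
  set Φ : ↥A → ι → ℝ := fun z i =>
    Sum.rec (fun g => g.1 z) (fun f => (f.1 (z : B))⁻¹) i with hΦ
  haveI : CompactSpace ↥D := isCompact_iff_compactSpace.mp (hD.isCompact)
  set Ψ : ↥D → {g : B → ℝ // Continuous g} → ℝ := fun d g => g.1 d with hΨ
  have contΨ : Continuous Ψ := continuous_pi fun g => g.2.comp continuous_subtype_val
  have injΨ : Function.Injective Ψ := by
    intro d₁ d₂ h
    by_contra hne
    have hne' : (d₁ : B) ≠ (d₂ : B) := fun h' => hne (Subtype.ext h')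
    obtain ⟨f, hf0, hf1, -⟩ := exists_continuous_zero_one_of_isClosed
      (isClosed_singleton (x := (d₁ : B))) (isClosed_singleton (x := (d₂ : B)))
      (by simpa [Set.disjoint_singleton] using hne')
    have := congrFun h ⟨f, f.continuous⟩
    simp only [hΨ] at this
    rw [hf0 rfl, hf1 rfl] at this
    norm_num at this
  have ceΨ : Topology.IsClosedEmbedding Ψ := contΨ.isClosedEmbedding injΨ
  set incl : ↥A → ↥D := Set.inclusion inter_subset_left with hincl
  have einc : IsEmbedding incl := IsEmbedding.inclusion _
  have hmemA : ∀ (z : ↥A) (f : ↥S), f.1 (z : B) ≠ 0 := fun z f => z.2.2 f.1 f.2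
  have contΦ : Continuous Φ := by
    apply continuous_pi
    rintro (g | f)
    · exact g.2.comp continuous_subtype_val
    · exact ((hS f.1 f.2).comp continuous_subtype_val).inv₀ (fun z => hmemA z f)
  set proj : (ι → ℝ) → ({g : B → ℝ // Continuous g} → ℝ) := fun p g => p (Sum.inl g)
    with hproj
  have contproj : Continuous proj := continuous_pi fun g => continuous_apply _
  have hcomp : proj ∘ Φ = Ψ ∘ incl := rfl
  have indΦ : IsInducing Φ := by
    refine IsInducing.of_comp contΦ contproj ?_
    rw [hcomp]
    exact ceΨ.toIsInducing.comp einc.toIsInducing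
  have injΦ : Function.Injective Φ := by
    intro z₁ z₂ h
    apply einc.injective
    apply injΨ
    funext g
    exact congrFun h (Sum.inl g)
  refine ⟨ι, Φ, ⟨⟨indΦ, injΦ⟩, ?_⟩⟩
  -- closed range
  rw [← closure_subset_iff_isClosed]
  intro y hy
  set G : Filter ↥A := comap Φ (𝓝 y) with hG
  haveI hGne : G.NeBot := comap_neBot (fun t ht => by
    rcases mem_closure_iff_nhds.mp hy t ht with ⟨w, hw, z, hz⟩
    exact ⟨z, hz ▸ hw⟩)
  have hΦG : Tendsto Φ G (𝓝 y) := map_comap_le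
  have htΨ : Tendsto (Ψ ∘ incl) G (𝓝 (proj y)) := by
    rw [← hcomp]
    exact (contproj.tendsto y).comp hΦG
  have hprojy : proj y ∈ Set.range Ψ := by
    have : proj y ∈ closure (Set.range Ψ) :=
      mem_closure_of_tendsto htΨ (Eventually.of_forall fun z => ⟨incl z, rfl⟩)
    rwa [ceΨ.isClosed_range.closure_eq] at this
  obtain ⟨d, hd⟩ := hprojy
  have htincl : Tendsto incl G (𝓝 d) := by
    rw [ceΨ.isEmbedding.tendsto_nhds_iff, hd]
    exact htΨ
  have htval : Tendsto (fun z : ↥A => (z : B)) G (𝓝 (d : B)) :=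
    (continuous_subtype_val.tendsto d).comp htincl
  have hdne : ∀ f ∈ S, f (d : B) ≠ 0 := by
    intro f hf hfd
    have h1 : Tendsto (fun z : ↥A => f (z : B)) G (𝓝 0) := by
      rw [← hfd]
      exact ((hS f hf).tendsto _).comp htval
    have h2 : Tendsto (fun z : ↥A => (f (z : B))⁻¹) G (𝓝 (y (Sum.inr ⟨f, hf⟩))) :=
      ((continuous_apply (Sum.inr (⟨f, hf⟩ : ↥S))).tendsto y).comp hΦG
    have h3 : Tendsto (fun z : ↥A => f (z : B) * (f (z : B))⁻¹) G
        (𝓝 (0 * y (Sum.inr ⟨f, hf⟩))) := h1.mul h2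
    have h4 : (fun z : ↥A => f (z : B) * (f (z : B))⁻¹) = fun _ => (1 : ℝ) := by
      funext z
      exact mul_inv_cancel₀ (hmemA z ⟨f, hf⟩)
    rw [h4] at h3
    have := tendsto_nhds_unique tendsto_const_nhds h3
    norm_num at this
  refine ⟨⟨d, d.2, hdne⟩, ?_⟩
  funext i
  rcases i with g | f
  · exact congrFun hd g
  · have h2 : Tendsto (fun z : ↥A => (f.1 (z : B))⁻¹) G (𝓝 (y (Sum.inr f))) :=
      ((continuous_apply (Sum.inr f)).tendsto y).comp hΦG
    have h1 : Tendsto (fun z : ↥A => (f.1 (z : B))⁻¹) G (𝓝 ((f.1 (d : B))⁻¹)) :=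
      (((hS f.1 f.2).tendsto _).comp htval).inv₀ (hdne f.1 f.2)
    exact tendsto_nhds_unique h1 h2

lemma IsRealcompactSpace.of_homeomorph {A B : Type} [TopologicalSpace A] [TopologicalSpace B]
    (h : A ≃ₜ B) (hB : IsRealcompactSpace B) : IsRealcompactSpace A := by
  obtain ⟨ι, f, hf⟩ := hB
  exact ⟨ι, f ∘ h, hf.comp h.isClosedEmbedding⟩

def IsCoz {X : Type} [TopologicalSpace X] (C : Set X) : Prop :=
  ∃ f : X → ℝ, Continuous f ∧ C = {x | f x ≠ 0}

/-- for a normal Tychonoff `X` and `P` realcompactness,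
`λ_P X = βX \ cl_{βX}(υX \ X)`. -/
theorem stmt10 (X : Type) [TopologicalSpace X] [T35Space X] [NormalSpace X] :
    (⋃₀ {V : Set (StoneCech X) |
        ∃ C : Set X, IsCoz C ∧ IsRealcompactSpace ↥(closure C) ∧
          V = interior (closure (stoneCechUnit '' C))}) =
      (closure (hewitt X \ Set.range (stoneCechUnit : X → StoneCech X)))ᶜ := by
  classical
  set e : X → StoneCech X := stoneCechUnit with he
  ext p
  simp only [Set.mem_sUnion, Set.mem_setOf_eq, Set.mem_compl_iff]
  constructor
  · rintro ⟨V, ⟨C, hcoz, hRC, rfl⟩, hpV⟩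
    intro hpcl
    rcases mem_closure_iff.mp hpcl _ isOpen_interior hpV with ⟨r, hr1, hr2, hr3⟩
    have : r ∈ Set.range e :=
      closure_inter_hewitt hRC ⟨interior_subset hr1, hr2⟩
    exact hr3 this
  · intro hp
    set U : Set (StoneCech X) := (closure (hewitt X \ Set.range e))ᶜ with hU
    have hUopen : IsOpen U := isClosed_closure.isOpen_compl
    have hpU : p ∈ U := hp
    -- Urysohn function
    obtain ⟨F, hF0, hF1, hFicc⟩ := exists_continuous_zero_one_of_isClosed
      (isClosed_closure (s := hewitt X \ Set.range e)) (isClosed_singleton (x := p))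
      (by rwa [Set.disjoint_singleton_right])
    set C : Set X := {x : X | 1/2 < F (e x)} with hC
    -- C is a cozero set
    have hcoz : IsCoz C := by
      refine ⟨fun x => max (F (e x) - 1/2) 0, ?_, ?_⟩
      · exact ((F.continuous.comp continuous_stoneCechUnit).sub continuous_const).max
          continuous_const
      · ext x
        simp only [hC, Set.mem_setOf_eq]
        constructor
        · intro hx
          have : 0 < F (e x) - 1/2 := by linarith
          intro hmax
          rw [max_eq_left (le_of_lt this)] at hmax
          linarith
        · intro hx
          by_contra hle
          push_neg at hle
          rw [max_eq_right (by linarith)] at hx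
          exact hx rfl
    -- closure (e '' C) is contained in {F ≥ 1/2} ⊆ U
    have hclC : closure (e '' C) ⊆ {r | 1/2 ≤ F r} := by
      apply closure_minimal
      · rintro _ ⟨x, hx, rfl⟩
        show (1:ℝ)/2 ≤ F (e x)
        exact le_of_lt hx
      · exact isClosed_le continuous_const F.continuous
    have hFU : {r : StoneCech X | 1/2 ≤ F r} ⊆ U := by
      intro r hr
      by_contra hrU
      have h0 : F r = 0 := hF0 (by simpa [hU] using hrU)
      simp only [Set.mem_setOf_eq, h0] at hr
      norm_num at hr
    -- realcompactness of closure C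
    have hRC : IsRealcompactSpace ↥(closure C) := by
      set S : Set (StoneCech X → ℝ) :=
        {f | Continuous f ∧ Set.range e ⊆ {x | f x ≠ 0}} with hS
      have hSset : {y : StoneCech X | ∀ f ∈ S, f y ≠ 0} = hewitt X := by
        ext y
        simp only [Set.mem_setOf_eq, mem_hewitt_iff]
        constructor
        · intro hy f hf hr
          exact hy f ⟨hf, hr⟩
        · rintro hy f ⟨hf, hr⟩
          exact hy f hf hr
      have haux := realcompact_aux (closure (e '' C)) isClosed_closure S
        (fun f hf => hf.1)
      rw [hSset] at haux
      have himg : e '' closure C = closure (e '' C) ∩ hewitt X := by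
        apply Set.Subset.antisymm
        · rintro _ ⟨x, hx, rfl⟩
          refine ⟨?_, range_subset_hewitt ⟨x, rfl⟩⟩
          exact image_closure_subset_closure_image continuous_stoneCechUnit ⟨x, hx, rfl⟩
        · rintro q ⟨hq1, hq2⟩
          have hqU : q ∈ U := hFU (hclC hq1)
          have hqr : q ∈ Set.range e := by
            by_contra hqr
            exact hqU (subset_closure ⟨hq2, hqr⟩)
          obtain ⟨x, rfl⟩ := hqr
          refine ⟨x, ?_, rfl⟩
          rw [isEmbedding_stoneCechUnit.closure_eq_preimage_closure_image C]
          exact hq1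
      have hhomeo : ↥(closure C) ≃ₜ ↥(e '' closure C) := by
        have := IsEmbedding.toHomeomorph (f := fun k : ↥(closure C) => e ↑k)
          (isEmbedding_stoneCechUnit.comp IsEmbedding.subtypeVal)
        rwa [← Set.image_eq_range] at this
      rw [himg] at hhomeo
      exact IsRealcompactSpace.of_homeomorph hhomeo haux
    -- p lies in the interior of closure (e '' C)
    have hpint : p ∈ interior (closure (e '' C)) := by
      rw [mem_interior]
      refine ⟨{r | 1/2 < F r}, ?_, isOpen_lt continuous_const F.continuous, ?_⟩
      · intro r hr
        rw [mem_closure_iff]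
        intro o ho hro
        rcases (denseRange_stoneCechUnit).exists_mem_open (ho.inter
          (isOpen_lt continuous_const F.continuous)) ⟨r, hro, hr⟩ with ⟨x, hx1, hx2⟩
        exact ⟨e x, hx1, ⟨x, hx2, rfl⟩⟩
      · show (1:ℝ)/2 < F p
        rw [hF1 rfl]
        norm_num
    exact ⟨interior (closure (e '' C)), ⟨C, hcoz, hRC, rfl⟩, hpint⟩
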